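/- Let 0 < s < 1/2 and B > 0, and let (g_n)_{n≥1} and (h_n)_{n≥1} be mutually independent standard real (mean 0, variance 1) Gaussian random variables; set f_n = g_n + i·h_n. Then there exist constants c > 0 and K₀ > 0, depending only on s and B, such that for all K ≥ K₀ one has P( Σ_{n≥1} n^{2s−2} |f_n|² > K² and Σ_{n≥1} n^{−2} |f_n|² ≤ B² ) ≤ exp(−c K²). -/

import Mathlib

set_option maxHeartbeats 1000000

open MeasureTheory ProbabilityTheory Real

lemma gauss_exp_lintegral :
    ∫⁻ x, ENNReal.ofReal (Real.exp (x^2/4)) ∂(gaussianReal 0 1) ≤ ENNReal.ofReal 2 := by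
  rw [gaussianReal_of_var_ne_zero 0 one_ne_zero,
    lintegral_withDensity_eq_lintegral_mul _ (measurable_gaussianPDF 0 1)
      (by measurability)]
  have hpt : ∀ x : ℝ, (gaussianPDF 0 1 * fun x => ENNReal.ofReal (Real.exp (x^2/4))) x
      = ENNReal.ofReal ((Real.sqrt (2*π))⁻¹ * Real.exp (-(4:ℝ)⁻¹ * x^2)) := by
    intro x
    simp only [Pi.mul_apply, gaussianPDF, gaussianPDFReal]
    rw [← ENNReal.ofReal_mul (by positivity)]
    congr 1
    rw [mul_assoc, ← Real.exp_add]
    norm_num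
    ring_nf
    tauto
  simp_rw [hpt]
  rw [← ofReal_integral_eq_lintegral_ofReal]
  · rw [integral_const_mul, integral_gaussian]
    apply ENNReal.ofReal_le_ofReal
    have h4 : Real.sqrt 4 = 2 := by
      rw [show (4:ℝ) = 2^2 by norm_num, Real.sqrt_sq (by norm_num)]
    have h1 : Real.sqrt (π / 4⁻¹) ≤ 2 * Real.sqrt (2*π) := by
      rw [← h4, ← Real.sqrt_mul (by norm_num)]
      apply Real.sqrt_le_sqrt; rw [h4, div_inv_eq_mul]; nlinarith [pi_pos]
    have h2 : (0:ℝ) < Real.sqrt (2*π) := by positivity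
    rw [inv_mul_le_iff₀ h2]
    linarith
  · exact (integrable_exp_neg_mul_sq (by norm_num)).const_mul _
  · filter_upwards with x; positivity

lemma gauss_tail (T : ℝ) :
    gaussianReal 0 1 {x : ℝ | T < x^2} ≤ ENNReal.ofReal (2 * Real.exp (-(T/4))) := by
  set μ := gaussianReal 0 1
  have hsub : {x : ℝ | T < x^2} ⊆ {x : ℝ | ENNReal.ofReal (Real.exp (T/4)) ≤ ENNReal.ofReal (Real.exp (x^2/4))} := by
    intro x hx
    exact ENNReal.ofReal_le_ofReal (Real.exp_le_exp.2 (by simp only [Set.mem_setOf_eq] at hx; linarith))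
  have hM := mul_meas_ge_le_lintegral₀ (μ := μ)
    (f := fun x => ENNReal.ofReal (Real.exp (x^2/4))) (by measurability)
    (ENNReal.ofReal (Real.exp (T/4)))
  have hε0 : ENNReal.ofReal (Real.exp (T/4)) ≠ 0 := by
    simp [ENNReal.ofReal_eq_zero, not_le, Real.exp_pos]
  have hεt : ENNReal.ofReal (Real.exp (T/4)) ≠ ⊤ := ENNReal.ofReal_ne_top
  calc μ {x : ℝ | T < x^2} ≤ μ {x | ENNReal.ofReal (Real.exp (T/4)) ≤ ENNReal.ofReal (Real.exp (x^2/4))} :=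
        measure_mono hsub
    _ = (ENNReal.ofReal (Real.exp (T/4)))⁻¹ *
        (ENNReal.ofReal (Real.exp (T/4)) * μ {x | ENNReal.ofReal (Real.exp (T/4)) ≤ ENNReal.ofReal (Real.exp (x^2/4))}) := by
        rw [← mul_assoc, ENNReal.inv_mul_cancel hε0 hεt, one_mul]
    _ ≤ (ENNReal.ofReal (Real.exp (T/4)))⁻¹ * ENNReal.ofReal 2 := by
        exact mul_le_mul_right (hM.trans gauss_exp_lintegral) _
    _ = ENNReal.ofReal (2 * Real.exp (-(T/4))) := by
        rw [← ENNReal.ofReal_inv_of_pos (Real.exp_pos _), ← ENNReal.ofReal_mul (by positivity),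
          ← Real.exp_neg]
        ring_nf

lemma abs_sq_aux (a b : ℝ) : ‖(a:ℂ) + Complex.I * b‖ ^ 2 = a^2 + b^2 := by
  rw [Complex.sq_norm, Complex.normSq_apply]
  simp
  ring
theorem stmt_15 (s : ℝ) (hs0 : 0 < s) (hs : s < 1/2) (B : ℝ) (hB : 0 < B) :
    ∃ c > (0 : ℝ), ∃ K₀ > (0 : ℝ),
      ∀ (Ω : Type) (_ : MeasureSpace Ω), IsProbabilityMeasure (volume : Measure Ω) →
      ∀ (g h : ℕ → Ω → ℝ),
        iIndepFun (Sum.elim g h) volume →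
        (∀ n : ℕ, Measure.map (g n) volume = gaussianReal 0 1) →
        (∀ n : ℕ, Measure.map (h n) volume = gaussianReal 0 1) →
        ∀ K : ℝ, K₀ ≤ K →
          volume {ω |
              (ENNReal.ofReal (K ^ 2) <
                ∑' n : {n : ℕ // 1 ≤ n}, ENNReal.ofReal
                  (((n : ℕ) : ℝ) ^ (2 * s - 2) *
                    ‖(g n ω : ℂ) + Complex.I * (h n ω : ℂ)‖ ^ 2)) ∧
              (∑' n : {n : ℕ // 1 ≤ n}, ENNReal.ofReal
                  (((n : ℕ) : ℝ) ^ (-2 : ℝ) *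
                    ‖(g n ω : ℂ) + Complex.I * (h n ω : ℂ)‖ ^ 2)
                ≤ ENNReal.ofReal (B ^ 2))} ≤
            ENNReal.ofReal (Real.exp (-c * K ^ 2)) := by
  -- parameters
  obtain ⟨γ, hγdef⟩ : ∃ γ : ℝ, γ = 1/2 - s := ⟨_, rfl⟩
  have hγ : 0 < γ := by rw [hγdef]; linarith
  obtain ⟨q, hqdef⟩ : ∃ q : ℝ, q = 2*s - 2 + (1/2 - s) := ⟨_, rfl⟩
  have hq : q < -1 := by rw [hqdef]; linarith
  -- summable series
  have hsumq : Summable (fun n : {n : ℕ // 1 ≤ n} => ((n : ℕ) : ℝ) ^ q) :=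
    (Real.summable_nat_rpow.mpr hq).subtype _
  have hsum2 : Summable (fun n : {n : ℕ // 1 ≤ n} => ((n : ℕ) : ℝ) ^ (-2 : ℝ)) :=
    (Real.summable_nat_rpow.mpr (by norm_num)).subtype _
  obtain ⟨Z, hZdef⟩ : ∃ Z : ℝ, Z = ∑' n : {n : ℕ // 1 ≤ n}, ((n : ℕ) : ℝ) ^ q := ⟨_, rfl⟩
  obtain ⟨Z₂, hZ₂def⟩ : ∃ Z₂ : ℝ, Z₂ = ∑' n : {n : ℕ // 1 ≤ n}, ((n : ℕ) : ℝ) ^ (-2:ℝ) := ⟨_, rfl⟩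
  have hZ1 : 1 ≤ Z := by
    rw [hZdef]
    have := Summable.le_tsum hsumq ⟨1, le_refl 1⟩ (fun _ _ => Real.rpow_nonneg (Nat.cast_nonneg _) _)
    simpa using this
  have hZ₂1 : 1 ≤ Z₂ := by
    rw [hZ₂def]
    have := Summable.le_tsum hsum2 ⟨1, le_refl 1⟩ (fun _ _ => Real.rpow_nonneg (Nat.cast_nonneg _) _)
    simpa using this
  have hZpos : 0 < Z := by linarith
  have hZ₂pos : 0 < Z₂ := by linarith
  obtain ⟨ε, hεdef⟩ : ∃ ε : ℝ, ε = Z⁻¹ := ⟨_, rfl⟩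
  have hε : 0 < ε := by rw [hεdef]; exact inv_pos.mpr hZpos
  have hεZ : ε * Z = 1 := by rw [hεdef]; exact inv_mul_cancel₀ (ne_of_gt hZpos)
  obtain ⟨R, hRdef⟩ : ∃ R : ℝ, R = max (16/(ε*γ)) (16*Real.log (4*Z₂)/ε) := ⟨_, rfl⟩
  have hRpos : 0 ≤ R := by
    rw [hRdef]
    exact le_trans (by positivity) (le_max_left _ _)
  refine ⟨ε/16, by linarith, 1 + Real.sqrt R, by positivity, ?_⟩
  intro Ω _ hprob g h _ hg hh K hK
  have hsR : Real.sqrt R ≤ K := by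
    have := Real.sqrt_nonneg R; linarith
  have hK1 : 1 ≤ K := by have := Real.sqrt_nonneg R; linarith
  have hRK : R ≤ K^2 := by
    calc R = Real.sqrt R ^ 2 := (Real.sq_sqrt hRpos).symm
    _ ≤ K^2 := pow_le_pow_left₀ (Real.sqrt_nonneg R) hsR 2
  have hK2a : 16/(ε*γ) ≤ K^2 := le_trans (hRdef ▸ le_max_left _ _) hRK
  have hK2b : 16*Real.log (4*Z₂)/ε ≤ K^2 := le_trans (hRdef ▸ le_max_right _ _) hRK
  have hKsq : (0:ℝ) ≤ ε * K^2 := mul_nonneg hε.le (sq_nonneg K)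
  -- aemeasurability
  have hgae : ∀ n, AEMeasurable (g n) volume := by
    intro n
    by_contra hna
    have h1 := hg n
    rw [Measure.map_of_not_aemeasurable hna] at h1
    have h2 : (gaussianReal 0 1) Set.univ = 1 := measure_univ
    rw [← h1] at h2; simp at h2
  have hhae : ∀ n, AEMeasurable (h n) volume := by
    intro n
    by_contra hna
    have h1 := hh n
    rw [Measure.map_of_not_aemeasurable hna] at h1
    have h2 : (gaussianReal 0 1) Set.univ = 1 := measure_univ
    rw [← h1] at h2; simp at h2
  -- thresholds and bad sets
  obtain ⟨τ, hτdef⟩ : ∃ τ : {n : ℕ // 1 ≤ n} → ℝ,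
      τ = (fun n : {n : ℕ // 1 ≤ n} => ε*K^2*((n:ℕ):ℝ)^γ/2) := ⟨_, rfl⟩
  obtain ⟨A, hAdef⟩ : ∃ A : {n : ℕ // 1 ≤ n} → Set Ω,
      A = (fun n : {n : ℕ // 1 ≤ n} => g n ⁻¹' {x : ℝ | τ n < x^2}) := ⟨_, rfl⟩
  obtain ⟨Bs, hBdef⟩ : ∃ Bs : {n : ℕ // 1 ≤ n} → Set Ω,
      Bs = (fun n : {n : ℕ // 1 ≤ n} => h n ⁻¹' {x : ℝ | τ n < x^2}) := ⟨_, rfl⟩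
  have hmeasS : ∀ n : {n : ℕ // 1 ≤ n}, MeasurableSet {x : ℝ | τ n < x^2} := by
    intro n
    exact measurableSet_lt measurable_const ((measurable_id.pow_const 2))
  -- set inclusion
  have hsub : {ω : Ω |
              (ENNReal.ofReal (K ^ 2) <
                ∑' n : {n : ℕ // 1 ≤ n}, ENNReal.ofReal
                  (((n : ℕ) : ℝ) ^ (2 * s - 2) *
                    ‖(g n ω : ℂ) + Complex.I * (h n ω : ℂ)‖ ^ 2)) ∧
              (∑' n : {n : ℕ // 1 ≤ n}, ENNReal.ofReal
                  (((n : ℕ) : ℝ) ^ (-2 : ℝ) *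
                    ‖(g n ω : ℂ) + Complex.I * (h n ω : ℂ)‖ ^ 2)
                ≤ ENNReal.ofReal (B ^ 2))} ⊆ ⋃ n, (A n ∪ Bs n) := by
    intro ω hω
    have h1 := hω.1
    by_contra hc
    simp only [hAdef, hBdef, Set.mem_iUnion, Set.mem_union, Set.mem_preimage,
      Set.mem_setOf_eq, not_exists, not_or, not_lt] at hc
    refine absurd h1 (not_lt.mpr ?_)
    calc ∑' n : {n : ℕ // 1 ≤ n}, ENNReal.ofReal
          (((n : ℕ) : ℝ) ^ (2 * s - 2) *
            ‖(g n ω : ℂ) + Complex.I * (h n ω : ℂ)‖ ^ 2)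
        ≤ ∑' n : {n : ℕ // 1 ≤ n}, ENNReal.ofReal (ε*K^2 * ((n:ℕ):ℝ) ^ q) := by
          refine ENNReal.tsum_le_tsum fun n => ENNReal.ofReal_le_ofReal ?_
          have hpos : (0:ℝ) < ((n:ℕ):ℝ) := by
            exact_mod_cast Nat.lt_of_lt_of_le Nat.zero_lt_one n.2
          rw [abs_sq_aux (g n ω) (h n ω)]
          have hc1 := (hc n).1
          have hc2 := (hc n).2
          rw [hτdef] at hc1 hc2
          have hb : (g n ω)^2 + (h n ω)^2 ≤ ε*K^2*((n:ℕ):ℝ)^γ := by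
            simp only at hc1 hc2
            linarith
          calc ((n:ℕ):ℝ) ^ (2*s-2) * ((g n ω)^2 + (h n ω)^2)
              ≤ ((n:ℕ):ℝ) ^ (2*s-2) * (ε*K^2*((n:ℕ):ℝ)^γ) :=
                mul_le_mul_of_nonneg_left hb (Real.rpow_nonneg hpos.le _)
            _ = ε*K^2 * (((n:ℕ):ℝ) ^ (2*s-2) * ((n:ℕ):ℝ)^γ) := by ring
            _ = ε*K^2 * ((n:ℕ):ℝ) ^ q := by
                rw [hγdef, hqdef, ← Real.rpow_add hpos]
      _ = ENNReal.ofReal (K^2) := by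
          have hnn : ∀ n : {n : ℕ // 1 ≤ n}, (0:ℝ) ≤ ((n:ℕ):ℝ) ^ q :=
            fun n => Real.rpow_nonneg (Nat.cast_nonneg _) _
          simp_rw [ENNReal.ofReal_mul hKsq]
          rw [ENNReal.tsum_mul_left, ← ENNReal.ofReal_tsum_of_nonneg hnn hsumq,
            ← hZdef, ← ENNReal.ofReal_mul hKsq]
          congr 1
          calc ε*K^2*Z = K^2*(ε*Z) := by ring
            _ = K^2 := by rw [hεZ, mul_one]
  -- tail bounds for each bad set
  have hA : ∀ n, volume (A n) ≤ ENNReal.ofReal (2 * Real.exp (-(τ n/4))) := by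
    intro n
    have hmap := Measure.map_apply_of_aemeasurable (hgae n) (hmeasS n)
    rw [hg n] at hmap
    simp only [hAdef]
    rw [← hmap]
    exact gauss_tail (τ n)
  have hB' : ∀ n, volume (Bs n) ≤ ENNReal.ofReal (2 * Real.exp (-(τ n/4))) := by
    intro n
    have hmap := Measure.map_apply_of_aemeasurable (hhae n) (hmeasS n)
    rw [hh n] at hmap
    simp only [hBdef]
    rw [← hmap]
    exact gauss_tail (τ n)
  -- per-n real bound
  have haγ : 2 ≤ ε*K^2/8*γ := by
    have h16 : 16 ≤ K^2*(ε*γ) := (div_le_iff₀ (mul_pos hε hγ)).mp hK2a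
    have hr : ε*K^2/8*γ = K^2*(ε*γ)/8 := by ring
    linarith
  have hexp : ∀ n : {n : ℕ // 1 ≤ n},
      4 * Real.exp (-(τ n/4)) ≤ 4 * Real.exp (-(ε*K^2/8)) * ((n:ℕ):ℝ) ^ (-2:ℝ) := by
    intro n
    have hpos : (0:ℝ) < ((n:ℕ):ℝ) := by
      exact_mod_cast Nat.lt_of_lt_of_le Nat.zero_lt_one n.2
    have hn1 : (1:ℝ) ≤ ((n:ℕ):ℝ) := by exact_mod_cast n.2
    have hlog : Real.log ((n:ℕ):ℝ) * γ + 1 ≤ ((n:ℕ):ℝ)^γ := by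
      rw [Real.rpow_def_of_pos hpos]
      exact Real.add_one_le_exp _
    have ha : (0:ℝ) ≤ ε*K^2/8 := by
      exact div_nonneg hKsq (by norm_num)
    have hτ4 : ε*K^2/8 * (Real.log ((n:ℕ):ℝ) * γ) + ε*K^2/8 ≤ τ n / 4 := by
      have hm := mul_le_mul_of_nonneg_left hlog ha
      rw [hτdef]
      simp only
      nlinarith [hm]
    have step1 : Real.exp (-(τ n/4)) ≤
        Real.exp (-(ε*K^2/8)) * Real.exp (Real.log ((n:ℕ):ℝ) * (-(ε*K^2/8*γ))) := by
      rw [← Real.exp_add]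
      apply Real.exp_le_exp.mpr
      nlinarith [hτ4]
    have step2 : Real.exp (Real.log ((n:ℕ):ℝ) * (-(ε*K^2/8*γ))) = ((n:ℕ):ℝ) ^ (-(ε*K^2/8*γ)) := by
      rw [Real.rpow_def_of_pos hpos]
    have step3 : ((n:ℕ):ℝ) ^ (-(ε*K^2/8*γ)) ≤ ((n:ℕ):ℝ) ^ (-2:ℝ) :=
      Real.rpow_le_rpow_of_exponent_le hn1 (by linarith)
    rw [step2] at step1
    calc 4 * Real.exp (-(τ n/4)) ≤ 4 * (Real.exp (-(ε*K^2/8)) * ((n:ℕ):ℝ) ^ (-(ε*K^2/8*γ))) := by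
          linarith [step1]
      _ ≤ 4 * (Real.exp (-(ε*K^2/8)) * ((n:ℕ):ℝ) ^ (-2:ℝ)) := by
          have := mul_le_mul_of_nonneg_left step3 (Real.exp_nonneg (-(ε*K^2/8)))
          linarith
      _ = 4 * Real.exp (-(ε*K^2/8)) * ((n:ℕ):ℝ) ^ (-2:ℝ) := by ring
  -- final real bound
  have hfinal : 4 * Real.exp (-(ε*K^2/8)) * Z₂ ≤ Real.exp (-(ε/16) * K^2) := by
    have hlog : Real.log (4*Z₂) ≤ ε*K^2/16 := by
      have h16 : 16*Real.log (4*Z₂) ≤ K^2*ε := (div_le_iff₀ hε).mp hK2b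
      have hr : ε*K^2/16 = K^2*ε/16 := by ring
      linarith
    have h4Z : 4*Z₂ ≤ Real.exp (ε*K^2/16) :=
      (Real.log_le_iff_le_exp (by positivity)).mp hlog
    calc 4 * Real.exp (-(ε*K^2/8)) * Z₂ = (4*Z₂) * Real.exp (-(ε*K^2/8)) := by ring
      _ ≤ Real.exp (ε*K^2/16) * Real.exp (-(ε*K^2/8)) :=
          mul_le_mul_of_nonneg_right h4Z (Real.exp_nonneg _)
      _ = Real.exp (ε*K^2/16 + -(ε*K^2/8)) := (Real.exp_add _ _).symm
      _ = Real.exp (-(ε/16) * K^2) := by ring_nf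
  -- assemble
  refine le_trans (measure_mono hsub) ?_
  calc volume (⋃ n, (A n ∪ Bs n))
      ≤ ∑' n, volume (A n ∪ Bs n) := measure_iUnion_le _
    _ ≤ ∑' n : {n : ℕ // 1 ≤ n}, ENNReal.ofReal (4 * Real.exp (-(ε*K^2/8)) * ((n:ℕ):ℝ) ^ (-2:ℝ)) := by
        refine ENNReal.tsum_le_tsum fun n => ?_
        calc volume (A n ∪ Bs n) ≤ volume (A n) + volume (Bs n) := measure_union_le _ _
          _ ≤ ENNReal.ofReal (2 * Real.exp (-(τ n/4))) + ENNReal.ofReal (2 * Real.exp (-(τ n/4))) :=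
              add_le_add (hA n) (hB' n)
          _ = ENNReal.ofReal (4 * Real.exp (-(τ n/4))) := by
              rw [← ENNReal.ofReal_add (by positivity) (by positivity)]
              ring_nf
          _ ≤ ENNReal.ofReal (4 * Real.exp (-(ε*K^2/8)) * ((n:ℕ):ℝ) ^ (-2:ℝ)) :=
              ENNReal.ofReal_le_ofReal (hexp n)
    _ = ENNReal.ofReal (4 * Real.exp (-(ε*K^2/8)) * Z₂) := by
        have hnn : ∀ n : {n : ℕ // 1 ≤ n}, (0:ℝ) ≤ ((n:ℕ):ℝ) ^ (-2:ℝ) :=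
          fun n => Real.rpow_nonneg (Nat.cast_nonneg _) _
        have h4e : (0:ℝ) ≤ 4 * Real.exp (-(ε*K^2/8)) := by positivity
        simp_rw [ENNReal.ofReal_mul h4e]
        rw [ENNReal.tsum_mul_left, ← ENNReal.ofReal_tsum_of_nonneg hnn hsum2,
          ← hZ₂def, ← ENNReal.ofReal_mul h4e]
    _ ≤ ENNReal.ofReal (Real.exp (-(ε/16) * K^2)) := ENNReal.ofReal_le_ofReal hfinal
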